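/- arXiv:2107.14542 — 5 statements merged into one kernel-verified Lean document; each statement's English description precedes it below -/
import Mathlib

section
/- Suppose there exists a constant C_κ ≥ 0 such that |τ_γ - e^{-κγ}| ≤ C_κ γ² and τ_γ ∈ (0,1) for all γ ∈ (0, γ̄], where γ̄ ≤ (κ + 2C_κ/κ)^{-1} and κ > 0. Then for any γ ∈ (0, γ̄] and any integer ℓ ≥ 1, it holds |τ_γ^ℓ - e^{-κγℓ}| ≤ C_κ ℓ γ². -/
open Real Set

lemma abs_pow_sub_pow_le_of_abs_le_one (a b : ℝ) (ha : |a| ≤ 1) (hb : |b| ≤ 1) (n : ℕ) :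
    |a ^ n - b ^ n| ≤ n * |a - b| := by
  induction n with
  | zero => simp
  | succ n ih =>
    have h1 : a ^ (n+1) - b ^ (n+1) = a * (a ^ n - b ^ n) + (a - b) * b ^ n := by ring
    have hbn : |b ^ n| ≤ 1 := by
      rw [abs_pow]; exact pow_le_one₀ (abs_nonneg b) hb
    calc |a ^ (n+1) - b ^ (n+1)| ≤ |a * (a ^ n - b ^ n)| + |(a - b) * b ^ n| := by
          rw [h1]; exact abs_add_le _ _
      _ = |a| * |a ^ n - b ^ n| + |a - b| * |b ^ n| := by rw [abs_mul, abs_mul]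
      _ ≤ 1 * (n * |a - b|) + |a - b| * 1 := by
          gcongr
      _ = (n + 1 : ℕ) * |a - b| := by push_cast; ring

/-- If `|τ_γ - e^{-κγ}| ≤ C_κ γ²` and `τ_γ ∈ (0,1)` for all `γ ∈ (0, γ̄]`, with
`γ̄ ≤ (κ + 2C_κ/κ)⁻¹`, then `|τ_γ^ℓ - e^{-κγℓ}| ≤ C_κ ℓ γ²` for all `γ ∈ (0, γ̄]`, `ℓ ≥ 1`. -/
theorem tau_pow_approx (κ Cκ γbar : ℝ) (τ : ℝ → ℝ)
    (hκ : 0 < κ) (hC : 0 ≤ Cκ) (hγbar : γbar ≤ (κ + 2 * Cκ / κ)⁻¹)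
    (happrox : ∀ γ ∈ Ioc (0 : ℝ) γbar, |τ γ - exp (-κ * γ)| ≤ Cκ * γ ^ 2)
    (hτ : ∀ γ ∈ Ioc (0 : ℝ) γbar, τ γ ∈ Ioo (0 : ℝ) 1) :
    ∀ γ ∈ Ioc (0 : ℝ) γbar, ∀ ℓ : ℕ, 1 ≤ ℓ →
      |τ γ ^ ℓ - exp (-κ * γ * ℓ)| ≤ Cκ * ℓ * γ ^ 2 := by
  intro γ hγ ℓ hℓ
  have hτγ := hτ γ hγ
  have ha : |τ γ| ≤ 1 := by
    rw [abs_le]; constructor <;> nlinarith [hτγ.1, hτγ.2]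
  have hexp : exp (-κ * γ) ≤ 1 := by
    apply exp_le_one_iff.mpr
    nlinarith [hγ.1, hκ]
  have hb : |exp (-κ * γ)| ≤ 1 := by
    rw [abs_of_pos (exp_pos _)]; exact hexp
  have key : exp (-κ * γ * ℓ) = exp (-κ * γ) ^ ℓ := by
    rw [mul_comm (-κ * γ) (ℓ : ℝ), Real.exp_nat_mul]
  rw [key]
  calc |τ γ ^ ℓ - exp (-κ * γ) ^ ℓ| ≤ ℓ * |τ γ - exp (-κ * γ)| :=
        abs_pow_sub_pow_le_of_abs_le_one _ _ ha hb ℓ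
    _ ≤ ℓ * (Cκ * γ ^ 2) := by
        exact mul_le_mul_of_nonneg_left (happrox γ hγ) (Nat.cast_nonneg ℓ)
    _ = Cκ * ℓ * γ ^ 2 := by ring
end

section
/- Suppose |τ_γ - e^{-κγ}| ≤ C_κ γ², τ_γ ∈ (0,1), and γ ≤ (κ + 2C_κ/κ)^{-1} where κ > 0, C_κ ≥ 0. Then |τ_γ - 1| ≤ (κ + C_κ γ)γ and |γ/(1 - τ_γ) - 1/κ| ≤ (2C_κ/κ² + 1)γ. -/
open Real

/-- For `t ≥ 0`, `exp (-t) ≤ 1 - t + t²/2`. -/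
lemma exp_neg_le_quadratic {t : ℝ} (ht : 0 ≤ t) : exp (-t) ≤ 1 - t + t ^ 2 / 2 := by
  have h := Real.quadratic_le_exp_of_nonneg ht
  have hpos : (0 : ℝ) < 1 + t + t ^ 2 / 2 := by nlinarith
  have h1 : exp (-t) ≤ (1 + t + t ^ 2 / 2)⁻¹ := by
    rw [Real.exp_neg]
    exact inv_anti₀ hpos h
  refine h1.trans ?_
  rw [inv_le_iff_one_le_mul₀ hpos]
  nlinarith [sq_nonneg t, sq_nonneg (t ^ 2)]

/-- If `|τ - e^{-κγ}| ≤ C_κ γ²`, `τ ∈ (0,1)` and `γ ≤ (κ + 2C_κ/κ)⁻¹`, then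
`|τ - 1| ≤ (κ + C_κ γ)γ` and `|γ/(1-τ) - 1/κ| ≤ (2C_κ/κ² + 1)γ`. -/
theorem tau_estimates (κ Cκ γ τ : ℝ)
    (hκ : 0 < κ) (hC : 0 ≤ Cκ) (hγ : 0 < γ) (hγle : γ ≤ (κ + 2 * Cκ / κ)⁻¹)
    (happrox : |τ - exp (-κ * γ)| ≤ Cκ * γ ^ 2) (hτ : τ ∈ Set.Ioo (0 : ℝ) 1) :
    |τ - 1| ≤ (κ + Cκ * γ) * γ ∧
      |γ / (1 - τ) - 1 / κ| ≤ (2 * Cκ / κ ^ 2 + 1) * γ := by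
  obtain ⟨hτ0, hτ1⟩ := hτ
  set E := exp (-κ * γ) with hE
  have ht : (0 : ℝ) ≤ κ * γ := by positivity
  have hlow : 1 - κ * γ ≤ E := by
    have := Real.add_one_le_exp (-κ * γ)
    linarith
  have hup : E ≤ 1 - κ * γ + (κ * γ) ^ 2 / 2 := by
    rw [hE, neg_mul]; exact exp_neg_le_quadratic ht
  have habs := abs_le.mp happrox
  -- γ * (κ² + 2Cκ) ≤ κ
  have hγle' : γ * (κ ^ 2 + 2 * Cκ) ≤ κ := by
    have hpos : (0 : ℝ) < κ + 2 * Cκ / κ := by positivity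
    have h1 : κ + 2 * Cκ / κ ≤ γ⁻¹ := (le_inv_comm₀ hγ hpos).mp hγle
    have h2 := mul_le_mul_of_nonneg_left h1 hγ.le
    rw [mul_inv_cancel₀ hγ.ne'] at h2
    have hk : 2 * Cκ / κ * κ = 2 * Cκ := by field_simp
    nlinarith
  have hd : κ * γ / 2 ≤ 1 - τ := by nlinarith
  constructor
  · rw [abs_of_nonpos (by linarith)]
    nlinarith
  · have hd0 : (0 : ℝ) < 1 - τ := by linarith
    have heq : γ / (1 - τ) - 1 / κ = (κ * γ - (1 - τ)) / (κ * (1 - τ)) := by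
      field_simp
    rw [heq, abs_div, abs_of_pos (mul_pos hκ hd0), div_le_iff₀ (mul_pos hκ hd0)]
    have hN : |κ * γ - (1 - τ)| ≤ κ ^ 2 * γ ^ 2 / 2 + Cκ * γ ^ 2 := by
      rw [abs_le]
      constructor <;> nlinarith
    have h2C : 2 * Cκ / κ ^ 2 * κ ^ 2 = 2 * Cκ := by field_simp
    nlinarith [mul_le_mul_of_nonneg_left hd (by positivity : (0:ℝ) ≤ (2 * Cκ / κ ^ 2 + 1) * γ * κ)]
end

section
/- Let σ, κ > 0 and Σ₁, Σ₂, Σ₃ as defined from the kinetic Langevin covariance. There exists t̄₀ > 0 and positive constants ϱ̲₁, ϱ̲₂, ϱ̲₃, ϱ̄₁, ϱ̄₂, ϱ̄₃ with ϱ̲₁ϱ̲₃ - ϱ̄₂² > 0, such that for all t₀ ∈ (0, t̄₀]: ϱ̲₁ ≤ Σ₁(t₀)/(σ²t₀³) ≤ ϱ̄₁, ϱ̲₂ ≤ Σ₂(t₀)/(σ²t₀²) ≤ ϱ̄₂, and ϱ̲₃ ≤ Σ₃(t₀)/(σ²t₀) ≤ ϱ̄₃. -/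
set_option maxHeartbeats 1000000

open Real MeasureTheory Set

private lemma exp_lb {x : ℝ} (h0 : 0 ≤ x) (h1 : x ≤ 1/20) :
    (19/20) * x ≤ 1 - Real.exp (-x) := by
  have hm : Real.exp x * Real.exp (-x) = 1 := by rw [← Real.exp_add]; simp
  have h2 : (x+1) * Real.exp (-x) ≤ 1 := by
    nlinarith [mul_le_mul_of_nonneg_right (Real.add_one_le_exp x) (Real.exp_pos (-x)).le]
  nlinarith [Real.add_one_le_exp (-x)]

private lemma exp_ub {x : ℝ} : 1 - Real.exp (-x) ≤ x := by
  nlinarith [Real.add_one_le_exp (-x)]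

/-- There exist `t̄₀ > 0` and positive constants `r₁, r₂, r₃, R₁, R₂, R₃` with
`r₁ r₃ - R₂² > 0` such that the rescaled covariance entries `Σᵢ(t₀)` of the kinetic
Langevin process are bounded between them for all `t₀ ∈ (0, t̄₀]`. -/
theorem langevin_covariance_scaling (σ κ : ℝ) (hσ : 0 < σ) (hκ : 0 < κ) :
    ∃ tbar : ℝ, 0 < tbar ∧ ∃ r1 r2 r3 R1 R2 R3 : ℝ,
      0 < r1 ∧ 0 < r2 ∧ 0 < r3 ∧ 0 < R1 ∧ 0 < R2 ∧ 0 < R3 ∧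
      r1 * r3 - R2 ^ 2 > 0 ∧
      ∀ t₀ ∈ Ioc (0 : ℝ) tbar,
        (r1 ≤ (σ ^ 2 * ∫ s in (0:ℝ)..t₀, ((1 - exp (-κ * (t₀ - s))) / κ) ^ 2) /
            (σ ^ 2 * t₀ ^ 3) ∧
          (σ ^ 2 * ∫ s in (0:ℝ)..t₀, ((1 - exp (-κ * (t₀ - s))) / κ) ^ 2) /
            (σ ^ 2 * t₀ ^ 3) ≤ R1) ∧
        (r2 ≤ (σ ^ 2 * ∫ s in (0:ℝ)..t₀, exp (-κ * (t₀ - s)) * (1 - exp (-κ * (t₀ - s))) / κ) /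
            (σ ^ 2 * t₀ ^ 2) ∧
          (σ ^ 2 * ∫ s in (0:ℝ)..t₀, exp (-κ * (t₀ - s)) * (1 - exp (-κ * (t₀ - s))) / κ) /
            (σ ^ 2 * t₀ ^ 2) ≤ R2) ∧
        (r3 ≤ (σ ^ 2 * ∫ s in (0:ℝ)..t₀, exp (-2 * κ * (t₀ - s))) / (σ ^ 2 * t₀) ∧
          (σ ^ 2 * ∫ s in (0:ℝ)..t₀, exp (-2 * κ * (t₀ - s))) / (σ ^ 2 * t₀) ≤ R3) := by
  refine ⟨1/(20*κ), by positivity, 361/1200, 361/800, 9/10, 1/3, 1/2, 1,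
    by norm_num, by norm_num, by norm_num, by norm_num, by norm_num, by norm_num,
    by norm_num, ?_⟩
  rintro t₀ ⟨ht0, ht1⟩
  have hσ2 : (0:ℝ) < σ ^ 2 := by positivity
  have hκt : κ * t₀ ≤ 1/20 := by
    have := mul_le_mul_of_nonneg_left ht1 hκ.le
    calc κ * t₀ ≤ κ * (1/(20*κ)) := this
    _ = 1/20 := by field_simp
  -- pointwise bound facts for s ∈ [0, t₀]
  have hxfact : ∀ s ∈ Icc (0:ℝ) t₀, 0 ≤ κ * (t₀ - s) ∧ κ * (t₀ - s) ≤ 1/20 := by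
    rintro s ⟨hs0, hs1⟩
    constructor
    · nlinarith
    · nlinarith
  -- integrability
  have hi1 : IntervalIntegrable (fun s => ((1 - exp (-κ * (t₀ - s))) / κ) ^ 2)
      volume 0 t₀ := by
    apply Continuous.intervalIntegrable; fun_prop
  have hi2 : IntervalIntegrable
      (fun s => exp (-κ * (t₀ - s)) * (1 - exp (-κ * (t₀ - s))) / κ) volume 0 t₀ := by
    apply Continuous.intervalIntegrable; fun_prop
  have hi3 : IntervalIntegrable (fun s => exp (-2 * κ * (t₀ - s))) volume 0 t₀ := by
    apply Continuous.intervalIntegrable; fun_prop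
  have hil2 : IntervalIntegrable (fun s => (361/400) * (t₀ - s)^2) volume 0 t₀ := by
    apply Continuous.intervalIntegrable; fun_prop
  have hiu2 : IntervalIntegrable (fun s => (t₀ - s)^2) volume 0 t₀ := by
    apply Continuous.intervalIntegrable; fun_prop
  have hil1 : IntervalIntegrable (fun s => (361/400) * (t₀ - s)) volume 0 t₀ := by
    apply Continuous.intervalIntegrable; fun_prop
  have hiu1 : IntervalIntegrable (fun s => (t₀ - s)) volume 0 t₀ := by
    apply Continuous.intervalIntegrable; fun_prop
  -- exact values of the comparison integrals
  have hv2 : ∫ s in (0:ℝ)..t₀, (t₀ - s)^2 = t₀^3/3 := by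
    rw [intervalIntegral.integral_comp_sub_left (fun u => u^2) t₀]
    simp [integral_pow]; ring
  have hv1 : ∫ s in (0:ℝ)..t₀, (t₀ - s) = t₀^2/2 := by
    rw [intervalIntegral.integral_comp_sub_left (fun u => u) t₀]
    simp
  -- Σ₁ bounds
  have hI1l : (361/400) * (t₀^3/3) ≤ ∫ s in (0:ℝ)..t₀, ((1 - exp (-κ * (t₀ - s))) / κ) ^ 2 := by
    have := intervalIntegral.integral_mono_on ht0.le hil2 hi1 (fun s hs => ?_)
    · calc (361/400) * (t₀^3/3) = ∫ s in (0:ℝ)..t₀, (361/400) * (t₀ - s)^2 := by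
            rw [intervalIntegral.integral_const_mul, hv2]
      _ ≤ _ := this
    · obtain ⟨hx0, hx1⟩ := hxfact s hs
      have h := exp_lb hx0 hx1
      have hb : (19/20) * (t₀ - s) ≤ (1 - exp (-(κ * (t₀ - s)))) / κ := by
        rw [le_div_iff₀ hκ]
        nlinarith
      have hnn : (0:ℝ) ≤ (19/20) * (t₀ - s) := by nlinarith [hs.2]
      have := pow_le_pow_left₀ hnn hb 2
      calc (361/400) * (t₀ - s)^2 = ((19/20) * (t₀ - s))^2 := by ring
      _ ≤ ((1 - exp (-(κ * (t₀ - s)))) / κ)^2 := this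
      _ = ((1 - exp (-κ * (t₀ - s))) / κ)^2 := by ring_nf
  have hI1u : (∫ s in (0:ℝ)..t₀, ((1 - exp (-κ * (t₀ - s))) / κ) ^ 2) ≤ t₀^3/3 := by
    have := intervalIntegral.integral_mono_on ht0.le hi1 hiu2 (fun s hs => ?_)
    · calc _ ≤ ∫ s in (0:ℝ)..t₀, (t₀ - s)^2 := this
      _ = t₀^3/3 := hv2
    · obtain ⟨hx0, hx1⟩ := hxfact s hs
      have h : 1 - exp (-(κ * (t₀ - s))) ≤ κ * (t₀ - s) := exp_ub
      have h0 : 0 ≤ 1 - exp (-(κ * (t₀ - s))) := by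
        nlinarith [Real.exp_le_one_iff.mpr (neg_nonpos_of_nonneg hx0)]
      have hb : (1 - exp (-(κ * (t₀ - s)))) / κ ≤ t₀ - s := by
        rw [div_le_iff₀ hκ]; nlinarith
      have hb0 : 0 ≤ (1 - exp (-(κ * (t₀ - s)))) / κ := by positivity
      have := pow_le_pow_left₀ hb0 hb 2
      calc ((1 - exp (-κ * (t₀ - s))) / κ)^2
          = ((1 - exp (-(κ * (t₀ - s)))) / κ)^2 := by ring_nf
      _ ≤ (t₀ - s)^2 := this
  -- Σ₂ bounds
  have hI2l : (361/400) * (t₀^2/2) ≤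
      ∫ s in (0:ℝ)..t₀, exp (-κ * (t₀ - s)) * (1 - exp (-κ * (t₀ - s))) / κ := by
    have := intervalIntegral.integral_mono_on ht0.le hil1 hi2 (fun s hs => ?_)
    · calc (361/400) * (t₀^2/2) = ∫ s in (0:ℝ)..t₀, (361/400) * (t₀ - s) := by
            rw [intervalIntegral.integral_const_mul, hv1]
      _ ≤ _ := this
    · obtain ⟨hx0, hx1⟩ := hxfact s hs
      have h := exp_lb hx0 hx1
      have he : (19/20 : ℝ) ≤ exp (-(κ * (t₀ - s))) := by
        nlinarith [Real.add_one_le_exp (-(κ * (t₀ - s)))]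
      have hκts : t₀ - s = (κ * (t₀ - s)) / κ := by field_simp
      show (361/400) * (t₀ - s) ≤ exp (-κ * (t₀ - s)) * (1 - exp (-κ * (t₀ - s))) / κ
      rw [neg_mul, le_div_iff₀ hκ]
      nlinarith [Real.exp_pos (-(κ * (t₀ - s)))]
  have hI2u : (∫ s in (0:ℝ)..t₀, exp (-κ * (t₀ - s)) * (1 - exp (-κ * (t₀ - s))) / κ)
      ≤ t₀^2/2 := by
    have := intervalIntegral.integral_mono_on ht0.le hi2 hiu1 (fun s hs => ?_)
    · calc _ ≤ ∫ s in (0:ℝ)..t₀, (t₀ - s) := this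
      _ = t₀^2/2 := hv1
    · obtain ⟨hx0, hx1⟩ := hxfact s hs
      have h : 1 - exp (-(κ * (t₀ - s))) ≤ κ * (t₀ - s) := exp_ub
      have he1 : exp (-(κ * (t₀ - s))) ≤ 1 := Real.exp_le_one_iff.mpr (neg_nonpos_of_nonneg hx0)
      have he0 := Real.exp_pos (-(κ * (t₀ - s)))
      show exp (-κ * (t₀ - s)) * (1 - exp (-κ * (t₀ - s))) / κ ≤ t₀ - s
      rw [neg_mul, div_le_iff₀ hκ]
      nlinarith
  -- Σ₃ bounds
  have hI3l : (9/10) * t₀ ≤ ∫ s in (0:ℝ)..t₀, exp (-2 * κ * (t₀ - s)) := by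
    have := intervalIntegral.integral_mono_on ht0.le
      (intervalIntegrable_const (c := (9/10:ℝ))) hi3 (fun s hs => ?_)
    · have hc : ∫ _ in (0:ℝ)..t₀, (9/10:ℝ) = 9/10 * t₀ := by
        rw [intervalIntegral.integral_const]; simp; ring
      rw [hc] at this; exact this
    · obtain ⟨hx0, hx1⟩ := hxfact s hs
      show (9/10 : ℝ) ≤ exp (-2 * κ * (t₀ - s))
      have : (-2) * κ * (t₀ - s) = -(2 * (κ * (t₀ - s))) := by ring
      rw [this]
      nlinarith [Real.add_one_le_exp (-(2 * (κ * (t₀ - s))))]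
  have hI3u : (∫ s in (0:ℝ)..t₀, exp (-2 * κ * (t₀ - s))) ≤ t₀ := by
    have := intervalIntegral.integral_mono_on ht0.le hi3
      (intervalIntegrable_const (c := (1:ℝ))) (fun s hs => ?_)
    · have hc : ∫ _ in (0:ℝ)..t₀, (1:ℝ) = t₀ := by simp
      rw [hc] at this; exact this
    · obtain ⟨hx0, hx1⟩ := hxfact s hs
      show exp (-2 * κ * (t₀ - s)) ≤ 1
      rw [Real.exp_le_one_iff]
      nlinarith
  -- conclude
  set J1 := ∫ s in (0:ℝ)..t₀, ((1 - exp (-κ * (t₀ - s))) / κ) ^ 2 with hJ1d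
  set J2 := ∫ s in (0:ℝ)..t₀, exp (-κ * (t₀ - s)) * (1 - exp (-κ * (t₀ - s))) / κ with hJ2d
  set J3 := ∫ s in (0:ℝ)..t₀, exp (-2 * κ * (t₀ - s)) with hJ3d
  have e1 : (σ ^ 2 * J1) / (σ ^ 2 * t₀ ^ 3) = J1 / t₀ ^ 3 :=
    mul_div_mul_left _ _ hσ2.ne'
  have e2 : (σ ^ 2 * J2) / (σ ^ 2 * t₀ ^ 2) = J2 / t₀ ^ 2 :=
    mul_div_mul_left _ _ hσ2.ne'
  have e3 : (σ ^ 2 * J3) / (σ ^ 2 * t₀) = J3 / t₀ :=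
    mul_div_mul_left _ _ hσ2.ne'
  have hp3 : (0:ℝ) < t₀ ^ 3 := by positivity
  have hp2 : (0:ℝ) < t₀ ^ 2 := by positivity
  refine ⟨⟨?_, ?_⟩, ⟨?_, ?_⟩, ⟨?_, ?_⟩⟩
  · rw [e1, le_div_iff₀ hp3]; nlinarith
  · rw [e1, div_le_iff₀ hp3]; nlinarith
  · rw [e2, le_div_iff₀ hp2]; nlinarith
  · rw [e2, div_le_iff₀ hp2]; nlinarith
  · rw [e3, le_div_iff₀ ht0]; nlinarith
  · rw [e3, div_le_iff₀ ht0]; nlinarith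
end

section
/- Let κ, σ, γ > 0 and define Σ₁ = σ² ∫₀^γ ((1-e^{-κ(γ-s)})/κ)² ds, Σ₂ = σ² ∫₀^γ e^{-κ(γ-s)}(1-e^{-κ(γ-s)})/κ ds, Σ₃ = σ² ∫₀^γ e^{-2κ(γ-s)} ds. Then the 2×2 matrix with rows (Σ₁, Σ₂) and (Σ₂, Σ₃) is invertible, i.e., Σ₁Σ₃ - Σ₂² > 0. -/
open Real MeasureTheory

private lemma aux_g_pos {x : ℝ} (hx : 0 < x) : 0 < (x - 2) * Real.exp x + x + 2 := by
  -- g(x) = (x-2)e^x + x + 2, g(0) = 0, g'(x) = (x-1)e^x + 1, g'(0) = 0, g''(x) = x e^x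
  have hg' : ∀ y : ℝ, HasDerivAt (fun z => (z - 2) * Real.exp z + z + 2)
      ((y - 1) * Real.exp y + 1) y := by
    intro y
    have h1 : HasDerivAt (fun z : ℝ => (z - 2) * Real.exp z)
        (1 * Real.exp y + (y - 2) * Real.exp y) y :=
      ((hasDerivAt_id y).sub_const 2).mul (Real.hasDerivAt_exp y)
    have h2 := (h1.add (hasDerivAt_id y)).add_const 2
    refine h2.congr_deriv ?_
    ring
  have hg'' : ∀ y : ℝ, HasDerivAt (fun z => (z - 1) * Real.exp z + 1)
      (y * Real.exp y) y := by
    intro y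
    have h1 : HasDerivAt (fun z : ℝ => (z - 1) * Real.exp z)
        (1 * Real.exp y + (y - 1) * Real.exp y) y :=
      ((hasDerivAt_id y).sub_const 1).mul (Real.hasDerivAt_exp y)
    have h2 := h1.add_const 1
    refine h2.congr_deriv ?_
    ring
  -- g' is strictly monotone on [0, ∞)
  have hmono' : StrictMonoOn (fun z => (z - 1) * Real.exp z + 1) (Set.Ici (0:ℝ)) := by
    apply strictMonoOn_of_deriv_pos (convex_Ici 0)
    · exact Continuous.continuousOn (by continuity)
    · intro y hy
      rw [interior_Ici] at hy
      rw [(hg'' y).deriv]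
      exact mul_pos hy (Real.exp_pos y)
  have hg'pos : ∀ y : ℝ, 0 < y → 0 < (y - 1) * Real.exp y + 1 := by
    intro y hy
    have := hmono' (Set.self_mem_Ici) (Set.mem_Ici.2 hy.le) hy
    simpa using this
  have hmono : StrictMonoOn (fun z => (z - 2) * Real.exp z + z + 2) (Set.Ici (0:ℝ)) := by
    apply strictMonoOn_of_deriv_pos (convex_Ici 0)
    · exact Continuous.continuousOn (by continuity)
    · intro y hy
      rw [interior_Ici] at hy
      rw [(hg' y).deriv]
      exact hg'pos y hy
  have := hmono (Set.self_mem_Ici) (Set.mem_Ici.2 hx.le) hx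
  simpa using this

set_option maxHeartbeats 1000000 in
/-- The covariance matrix of the noise increments of the stochastic exponential Euler
scheme is invertible: `Σ₁Σ₃ - Σ₂² > 0`. -/
theorem exponential_euler_covariance_invertible (κ σ γ : ℝ)
    (hκ : 0 < κ) (hσ : 0 < σ) (hγ : 0 < γ) :
    (σ ^ 2 * ∫ s in (0:ℝ)..γ, ((1 - exp (-κ * (γ - s))) / κ) ^ 2) *
        (σ ^ 2 * ∫ s in (0:ℝ)..γ, exp (-2 * κ * (γ - s))) -
      (σ ^ 2 * ∫ s in (0:ℝ)..γ, exp (-κ * (γ - s)) * (1 - exp (-κ * (γ - s))) / κ) ^ 2 > 0 := by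
  have hκ0 : κ ≠ 0 := ne_of_gt hκ
  set u : ℝ := Real.exp (-κ * γ) with hu
  have hu0 : 0 < u := Real.exp_pos _
  have hu1 : u < 1 := by
    rw [hu]
    apply Real.exp_lt_one_iff.2
    nlinarith
  -- derivative of s ↦ exp (c * (γ - s)) is -c * exp (c * (γ - s))
  have hder : ∀ (c x : ℝ), HasDerivAt (fun s => Real.exp (c * (γ - s)))
      (-c * Real.exp (c * (γ - x))) x := by
    intro c x
    have h1 : HasDerivAt (fun s : ℝ => c * (γ - s)) (-c) x := by
      simpa using ((hasDerivAt_id x).const_sub γ).const_mul c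
    simpa [mul_comm] using h1.exp
  -- First integral
  have hI1 : ∫ s in (0:ℝ)..γ, ((1 - exp (-κ * (γ - s))) / κ) ^ 2 =
      (γ - 2 / κ + 1 / (2 * κ)) / κ ^ 2 - (0 - 2 * u / κ + u ^ 2 / (2 * κ)) / κ ^ 2 := by
    have hF : ∀ x : ℝ, HasDerivAt
        (fun s => (s - (2 / κ) * Real.exp (-κ * (γ - s))
          + (1 / (2 * κ)) * Real.exp (-(2 * κ) * (γ - s))) / κ ^ 2)
        (((1 - Real.exp (-κ * (γ - x))) / κ) ^ 2) x := by
      intro x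
      have h1 := ((hasDerivAt_id x).sub ((hder (-κ) x).const_mul (2 / κ))).add
        ((hder (-(2 * κ)) x).const_mul (1 / (2 * κ)))
      have h2 := h1.div_const (κ ^ 2)
      refine h2.congr_deriv ?_
      have he : Real.exp (-(2 * κ) * (γ - x)) = Real.exp (-κ * (γ - x)) ^ 2 := by
        rw [← Real.exp_nat_mul]; ring_nf
      rw [he]
      field_simp
      try ring
    rw [intervalIntegral.integral_eq_sub_of_hasDerivAt (fun x _ => hF x)
      (Continuous.intervalIntegrable (by continuity) _ _)]
    simp only [sub_self, mul_zero, Real.exp_zero]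
    rw [show -κ * (γ - 0) = -κ * γ by ring, show -(2 * κ) * (γ - 0) = 2 * (-κ * γ) by ring]
    have hu2 : Real.exp (2 * (-κ * γ)) = u ^ 2 := by
      rw [two_mul, Real.exp_add, ← hu]; ring
    rw [hu2, ← hu]
    ring
  -- Third integral
  have hI3 : ∫ s in (0:ℝ)..γ, exp (-2 * κ * (γ - s)) = 1 / (2 * κ) - u ^ 2 / (2 * κ) := by
    have hF : ∀ x : ℝ, HasDerivAt
        (fun s => (1 / (2 * κ)) * Real.exp (-2 * κ * (γ - s)))
        (Real.exp (-2 * κ * (γ - x))) x := by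
      intro x
      have h1 := (hder (-2 * κ) x).const_mul (1 / (2 * κ))
      refine h1.congr_deriv ?_
      field_simp
      try ring
    rw [intervalIntegral.integral_eq_sub_of_hasDerivAt (fun x _ => hF x)
      (Continuous.intervalIntegrable (by continuity) _ _)]
    simp only [sub_self, mul_zero, Real.exp_zero]
    rw [show -2 * κ * (γ - 0) = 2 * (-κ * γ) by ring]
    have hu2 : Real.exp (2 * (-κ * γ)) = u ^ 2 := by
      rw [two_mul, Real.exp_add, ← hu]; ring
    rw [hu2]
    ring
  -- Second integral
  have hI2 : ∫ s in (0:ℝ)..γ, exp (-κ * (γ - s)) * (1 - exp (-κ * (γ - s))) / κ =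
      (1 / κ - 1 / (2 * κ)) / κ - (u / κ - u ^ 2 / (2 * κ)) / κ := by
    have hF : ∀ x : ℝ, HasDerivAt
        (fun s => ((1 / κ) * Real.exp (-κ * (γ - s))
          - (1 / (2 * κ)) * Real.exp (-(2 * κ) * (γ - s))) / κ)
        (Real.exp (-κ * (γ - x)) * (1 - Real.exp (-κ * (γ - x))) / κ) x := by
      intro x
      have h1 := (((hder (-κ) x).const_mul (1 / κ)).sub
        ((hder (-(2 * κ)) x).const_mul (1 / (2 * κ)))).div_const κ
      refine h1.congr_deriv ?_
      have he : Real.exp (-(2 * κ) * (γ - x)) = Real.exp (-κ * (γ - x)) ^ 2 := by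
        rw [← Real.exp_nat_mul]; ring_nf
      rw [he]
      field_simp
      try ring
    rw [intervalIntegral.integral_eq_sub_of_hasDerivAt (fun x _ => hF x)
      (Continuous.intervalIntegrable (by continuity) _ _)]
    simp only [sub_self, mul_zero, Real.exp_zero]
    rw [show -κ * (γ - 0) = -κ * γ by ring, show -(2 * κ) * (γ - 0) = 2 * (-κ * γ) by ring]
    have hu2 : Real.exp (2 * (-κ * γ)) = u ^ 2 := by
      rw [two_mul, Real.exp_add, ← hu]; ring
    rw [hu2, ← hu]
    ring
  rw [hI1, hI2, hI3]
  -- key inequality: κγ(1+u) + 2u - 2 > 0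
  have hkey : 0 < κ * γ * (1 + u) + 2 * u - 2 := by
    have hg := aux_g_pos (mul_pos hκ hγ)
    have hue : Real.exp (κ * γ) * u = 1 := by
      rw [hu, ← Real.exp_add]; simp
    nlinarith [Real.exp_pos (κ * γ), hu0]
  have hdet : ((γ - 2 / κ + 1 / (2 * κ)) / κ ^ 2 - (0 - 2 * u / κ + u ^ 2 / (2 * κ)) / κ ^ 2) *
      (1 / (2 * κ) - u ^ 2 / (2 * κ)) -
      ((1 / κ - 1 / (2 * κ)) / κ - (u / κ - u ^ 2 / (2 * κ)) / κ) ^ 2 =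
      (1 - u) * (κ * γ * (1 + u) + 2 * u - 2) / (2 * κ ^ 4) := by
    field_simp
    ring
  have hσ2 : (0:ℝ) < σ ^ 2 := by positivity
  have hpos : 0 < (1 - u) * (κ * γ * (1 + u) + 2 * u - 2) / (2 * κ ^ 4) := by
    apply div_pos
    · exact mul_pos (by linarith) hkey
    · positivity
  have key2 : 0 < σ ^ 2 * σ ^ 2 *
      (((γ - 2 / κ + 1 / (2 * κ)) / κ ^ 2 - (0 - 2 * u / κ + u ^ 2 / (2 * κ)) / κ ^ 2) *
        (1 / (2 * κ) - u ^ 2 / (2 * κ)) -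
        ((1 / κ - 1 / (2 * κ)) / κ - (u / κ - u ^ 2 / (2 * κ)) / κ) ^ 2) := by
    rw [hdet]; exact mul_pos (mul_pos hσ2 hσ2) hpos
  nlinarith [key2]
end

section
/- Let U : ℝ^d → ℝ be C¹ with L-Lipschitz gradient, and suppose there exist a > 0 and b ∈ ℝ such that -⟨x, ∇U(x)⟩ ≤ -a(||x|| + ||∇U(x)||²) + b for all x. Then there exists b̃ ∈ ℝ such that for all x, h ∈ ℝ^d: -⟨x, ∇U(x+h)⟩ ≤ -a(||x|| + ||∇U(x)||²/4) + b̃(1 + ||h||²). -/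
set_option maxHeartbeats 1000000


open Gradient RealInnerProductSpace

/-- If `∇U` is `L`-Lipschitz and `-⟨x, ∇U(x)⟩ ≤ -a(‖x‖ + ‖∇U(x)‖²) + b`, then there is
`b̃` with `-⟨x, ∇U(x+h)⟩ ≤ -a(‖x‖ + ‖∇U(x)‖²/4) + b̃(1 + ‖h‖²)` for all `x, h`. -/
theorem grad_drift_perturbed {d : ℕ} (L : NNReal) (U : EuclideanSpace ℝ (Fin d) → ℝ)
    (hC1 : ContDiff ℝ 1 U) (hLip : LipschitzWith L (∇ U))
    (a b : ℝ) (ha : 0 < a)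
    (hdrift : ∀ x, -⟪x, ∇ U x⟫ ≤ -(a * (‖x‖ + ‖∇ U x‖ ^ 2)) + b) :
    ∃ btilde : ℝ, ∀ x h : EuclideanSpace ℝ (Fin d),
      -⟪x, ∇ U (x + h)⟫ ≤ -(a * (‖x‖ + ‖∇ U x‖ ^ 2 / 4)) + btilde * (1 + ‖h‖ ^ 2) := by
  set c : ℝ := 1 / (2 * a) with hcdef
  have hcpos : (0 : ℝ) < c := by positivity
  have hc : 2 * a * c = 1 := by rw [hcdef, mul_one_div_cancel (by positivity)]
  have hL : (0 : ℝ) ≤ L := L.coe_nonneg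
  refine ⟨|b| + a + c + a * (L : ℝ) ^ 2 / 2, fun x h => ?_⟩
  set v := ∇ U (x + h) with hv
  have hder := hdrift (x + h)
  rw [← hv] at hder
  have hsplit : -⟪x, v⟫ = -⟪x + h, v⟫ + ⟪h, v⟫ := by
    rw [inner_add_left]; ring
  -- Young's inequality
  have hyoung : ⟪h, v⟫ ≤ c * ‖h‖ ^ 2 + a / 2 * ‖v‖ ^ 2 := by
    have hinner : ⟪h, v⟫ ≤ ‖h‖ * ‖v‖ := real_inner_le_norm h v
    have key : 0 ≤ c * (‖h‖ - a * ‖v‖) ^ 2 := by positivity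
    have m1 : (2 * a * c) * (‖h‖ * ‖v‖) = ‖h‖ * ‖v‖ := by rw [hc]; ring
    have m2 : (2 * a * c) * (a / 2 * ‖v‖ ^ 2) = a / 2 * ‖v‖ ^ 2 := by rw [hc]; ring
    nlinarith [key, m1, m2]
  -- Lipschitz bound
  have hlipb : ‖∇ U x‖ ≤ ‖v‖ + L * ‖h‖ := by
    have hd := hLip.dist_le_mul x (x + h)
    rw [dist_eq_norm, dist_eq_norm] at hd
    have h1 : x - (x + h) = -h := by abel
    rw [h1, norm_neg] at hd
    have h2 : ‖∇ U x‖ - ‖v‖ ≤ ‖∇ U x - v‖ := norm_sub_norm_le _ _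
    linarith
  have hG2 : a / 4 * ‖∇ U x‖ ^ 2 ≤ a / 2 * ‖v‖ ^ 2 + a / 2 * (L : ℝ) ^ 2 * ‖h‖ ^ 2 := by
    have hGnn : (0 : ℝ) ≤ ‖∇ U x‖ := norm_nonneg _
    have h2 : ‖∇ U x‖ ^ 2 ≤ 2 * ‖v‖ ^ 2 + 2 * (L : ℝ) ^ 2 * ‖h‖ ^ 2 := by
      nlinarith [sq_nonneg (‖v‖ - (L : ℝ) * ‖h‖), norm_nonneg v, norm_nonneg h]
    nlinarith
  -- triangle inequality for norms, multiplied by a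
  have hnx : a * ‖x‖ ≤ a * ‖x + h‖ + a * ‖h‖ := by
    have : ‖x‖ ≤ ‖x + h‖ + ‖h‖ := by
      have := norm_add_le (x + h) (-h)
      simpa using this
    nlinarith
  have hHn : a * ‖h‖ ≤ a + a * ‖h‖ ^ 2 := by
    nlinarith [sq_nonneg (‖h‖ - 1)]
  have hb : b ≤ |b| + |b| * ‖h‖ ^ 2 := by
    have h1 : b ≤ |b| := le_abs_self b
    have h2 : 0 ≤ |b| * ‖h‖ ^ 2 := by positivity
    linarith
  have hch : c * ‖h‖ ^ 2 ≤ c + c * ‖h‖ ^ 2 := by linarith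
  have haL : a / 2 * (L : ℝ) ^ 2 * ‖h‖ ^ 2 ≤ a * (L : ℝ) ^ 2 / 2 + a * (L : ℝ) ^ 2 / 2 * ‖h‖ ^ 2 := by
    have : 0 ≤ a * (L : ℝ) ^ 2 / 2 := by positivity
    nlinarith
  linarith [hder, hsplit, hyoung, hG2, hnx, hHn, hb, hch, haL]
end
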